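/- Let V be a finite-dimensional real inner product space with SPD operator K and subspace decomposition V = V₀ + ... + V_m with stability constants C₁, C₂ (as in additive Schwarz theory), P = Σ P_j the additive Schwarz operator, and u the exact solution of (Ku, v) = (f, v). Then the preconditioned conjugate gradient iterates satisfy |u - u^(ℓ)|_K ≤ 2((√κ - 1)/(√κ + 1))^ℓ |u - u^(0)|_K with κ = C₁C₂. -/

import Mathlib

open scoped BigOperators RealInnerProductSpace

section ChebHelpers
open Polynomial Polynomial.Chebyshev

theorem cheb_natDegree_le (n : ℕ) : (T ℝ (n:ℤ)).natDegree ≤ n := by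
  induction n using Nat.strong_induction_on with
  | _ n ih =>
    match n with
    | 0 => simp [T_zero]
    | 1 => simp [T_one]
    | (k+2) =>
      have h2 : ((k+2:ℕ):ℤ) = (k:ℤ)+2 := by push_cast; ring
      rw [h2, T_add_two]
      refine le_trans (natDegree_sub_le _ _) ?_
      have hA : (2 * X * T ℝ ((k:ℤ)+1)).natDegree ≤ k + 2 := by
        refine le_trans (natDegree_mul_le) ?_
        have h1 : ((k+1:ℕ):ℤ) = (k:ℤ)+1 := by push_cast; ring
        have := ih (k+1) (by omega)
        rw [h1] at this
        have h2X : (2 * X : ℝ[X]).natDegree ≤ 1 :=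
          le_trans natDegree_mul_le (by simp)
        omega
      have hB := ih k (by omega)
      omega

theorem cheb_eval_half (s : ℝ) (hs : s ≠ 0) (n : ℕ) :
    (T ℝ (n:ℤ)).eval ((s + s⁻¹)/2) = (s^n + s⁻¹^n)/2 := by
  induction n using Nat.strong_induction_on with
  | _ n ih =>
    match n with
    | 0 => simp [T_zero]
    | 1 => simp [T_one]
    | (k+2) =>
      have h2 : ((k+2:ℕ):ℤ) = (k:ℤ)+2 := by push_cast; ring
      rw [h2, T_add_two]
      have e1 := ih (k+1) (by omega)
      have e0 := ih k (by omega)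
      have h1 : ((k+1:ℕ):ℤ) = (k:ℤ)+1 := by push_cast; ring
      rw [h1] at e1
      simp only [eval_sub, eval_mul, eval_ofNat, eval_X, e1, e0]
      have hss : s * s⁻¹ = 1 := mul_inv_cancel₀ hs
      linear_combination (s^k + s⁻¹^k)/2 * hss

theorem cheb_abs_le (n : ℤ) (y : ℝ) (hy : y ∈ Set.Icc (-1:ℝ) 1) :
    |(T ℝ n).eval y| ≤ 1 := by
  obtain ⟨θ, hθ⟩ : ∃ θ, Real.cos θ = y := ⟨Real.arccos y, Real.cos_arccos hy.1 hy.2⟩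
  rw [← hθ, T_real_cos]
  exact Real.abs_cos_le_one _

theorem cheb_poly_exists (a b : ℝ) (ha : 0 < a) (hab : a ≤ b) (ℓ : ℕ) :
    ∃ q : Polynomial ℝ, q.natDegree ≤ ℓ ∧ q.eval 0 = 1 ∧
      ∀ x ∈ Set.Icc a b,
        |q.eval x| ≤ 2 * ((Real.sqrt (b/a) - 1)/(Real.sqrt (b/a) + 1))^ℓ := by
  rcases Nat.eq_zero_or_pos ℓ with hℓ | hℓ
  · subst hℓ
    exact ⟨1, by simp, by simp, fun x _ => by norm_num⟩
  rcases eq_or_lt_of_le hab with hba | hba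
  · -- a = b : use (1 - a⁻¹ X)^ℓ
    subst hba
    refine ⟨(1 - C a⁻¹ * X)^ℓ, ?_, ?_, ?_⟩
    · calc ((1 - C a⁻¹ * X)^ℓ).natDegree ≤ ℓ * (1 - C a⁻¹ * X).natDegree :=
            natDegree_pow_le
        _ ≤ ℓ * 1 := by
            refine Nat.mul_le_mul_left _ ?_
            refine le_trans (natDegree_sub_le _ _) ?_
            simp [natDegree_mul_le.trans]
        _ = ℓ := by omega
    · simp
    · intro x hx
      have hxa : x = a := le_antisymm hx.2 hx.1
      subst hxa
      rw [div_self ha.ne', Real.sqrt_one]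
      simp [eval_pow, mul_inv_cancel₀ (ne_of_gt ha) , inv_mul_cancel₀ (ne_of_gt ha),
        zero_pow (by omega : ℓ ≠ 0)]
  · -- a < b : Chebyshev
    set t := Real.sqrt (b/a) with hts
    have hba' : (1:ℝ) < b / a := (one_lt_div ha).2 hba
    have ht1 : 1 < t := by
      rw [hts, show (1:ℝ) = Real.sqrt 1 from Real.sqrt_one.symm]
      exact Real.sqrt_lt_sqrt (by norm_num) hba'
    have ht2 : t^2 = b/a := Real.sq_sqrt (by positivity)
    have htm : t - 1 ≠ 0 := by linarith
    have htp : t + 1 ≠ 0 := by linarith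
    set s : ℝ := (t+1)/(t-1) with hsd
    have hs0 : 0 < s := by apply div_pos <;> linarith
    have hsinv : s⁻¹ = (t-1)/(t+1) := by rw [hsd, inv_div]
    have hbma : 0 < b - a := by linarith
    set σ : ℝ := (b+a)/(b-a) with hσd
    have hσ : σ = (s + s⁻¹)/2 := by
      have hb : b = a * t^2 := by rw [ht2]; field_simp
      have h7 : a*t^2 - a ≠ 0 := by nlinarith
      have h8 : (t-1)*(t+1)*2 ≠ 0 := by
        refine mul_ne_zero (mul_ne_zero htm htp) two_ne_zero
      rw [hσd, hsd, inv_div, hb, div_add_div _ _ htm htp, div_div,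
        div_eq_div_iff h7 h8]
      ring
    set Tσ : ℝ := (T ℝ (ℓ:ℤ)).eval σ with hTσd
    have hTσ : Tσ = (s^ℓ + s⁻¹^ℓ)/2 := by
      rw [hTσd, hσ, cheb_eval_half s hs0.ne']
    have hTσpos : s^ℓ/2 < Tσ := by
      rw [hTσ]
      have : 0 < s⁻¹^ℓ := by positivity
      linarith
    have hTσpos' : 0 < Tσ := lt_trans (by positivity) hTσpos
    refine ⟨Polynomial.C Tσ⁻¹ * ((T ℝ (ℓ:ℤ)).comp (C σ - C (2/(b-a)) * X)), ?_, ?_, ?_⟩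
    · refine le_trans natDegree_mul_le ?_
      rw [natDegree_C, zero_add]
      refine le_trans natDegree_comp_le ?_
      have h1 : (C σ - C (2/(b-a)) * X).natDegree ≤ 1 := by
        refine le_trans (natDegree_sub_le _ _) ?_
        simp
        exact le_trans natDegree_mul_le (by simp)
      calc (T ℝ (ℓ:ℤ)).natDegree * (C σ - C (2/(b-a)) * X).natDegree
          ≤ ℓ * 1 := Nat.mul_le_mul (cheb_natDegree_le ℓ) h1
        _ = ℓ := by omega
    · simp [eval_comp, ← hTσd, inv_mul_cancel₀ hTσpos'.ne']
    · intro x hx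
      have hy : σ - 2/(b-a)*x ∈ Set.Icc (-1:ℝ) 1 := by
        have e : σ - 2/(b-a)*x = (b+a-2*x)/(b-a) := by
          rw [hσd]; field_simp
        rw [e]
        constructor
        · rw [le_div_iff₀ hbma]
          nlinarith [hx.2]
        · rw [div_le_iff₀ hbma]
          nlinarith [hx.1]
      rw [eval_mul, eval_C, eval_comp]
      simp only [eval_sub, eval_mul, eval_C, eval_X]
      rw [abs_mul, abs_of_pos (inv_pos.2 hTσpos')]
      have h1 := cheb_abs_le (ℓ:ℤ) _ hy
      have h2 : Tσ⁻¹ ≤ 2 * s⁻¹^ℓ := by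
        have h3 : Tσ⁻¹ ≤ (s^ℓ/2)⁻¹ := inv_anti₀ (by positivity) hTσpos.le
        calc Tσ⁻¹ ≤ (s^ℓ/2)⁻¹ := h3
          _ = 2 * s⁻¹^ℓ := by rw [inv_div, div_eq_mul_inv, inv_pow]
      calc Tσ⁻¹ * |(T ℝ (ℓ:ℤ)).eval (σ - 2/(b-a)*x)| ≤ Tσ⁻¹ * 1 :=
            mul_le_mul_of_nonneg_left h1 (by positivity)
        _ = Tσ⁻¹ := mul_one _
        _ ≤ 2 * s⁻¹^ℓ := h2
        _ = 2 * ((t-1)/(t+1))^ℓ := by rw [hsinv]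

end ChebHelpers


theorem aeval_apply_eigen {W : Type} [AddCommGroup W] [Module ℝ W]
    (T : W →ₗ[ℝ] W) (μ : ℝ) (e : W) (h : T e = μ • e) (q : Polynomial ℝ) :
    (Polynomial.aeval T q) e = q.eval μ • e := by
  induction q using Polynomial.induction_on' with
  | add p r hp hr => simp [hp, hr, add_smul]
  | monomial n c =>
    have hpow : ∀ k : ℕ, (T ^ k) e = μ ^ k • e := by
      intro k
      induction k with
      | zero => simp
      | succ k ihk =>
        rw [pow_succ', Module.End.mul_apply, ihk, map_smul, h, smul_smul, pow_succ',
          mul_comm]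
    simp [Polynomial.aeval_monomial, Polynomial.eval_monomial, hpow, smul_smul,
      Algebra.algebraMap_eq_smul_one, mul_comm]

theorem spectral_poly_bound {W : Type} [NormedAddCommGroup W] [InnerProductSpace ℝ W]
    [FiniteDimensional ℝ W]
    (T : W →ₗ[ℝ] W) (hT : T.IsSymmetric) (a b M : ℝ) (hM0 : 0 ≤ M)
    (hlow : ∀ w : W, a * ⟪w, w⟫ ≤ ⟪T w, w⟫) (hup : ∀ w : W, ⟪T w, w⟫ ≤ b * ⟪w, w⟫)
    (q : Polynomial ℝ) (hM : ∀ x ∈ Set.Icc a b, |q.eval x| ≤ M) (w : W) :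
    ‖(Polynomial.aeval T q) w‖ ≤ M * ‖w‖ := by
  set n := Module.finrank ℝ W with hn
  have hfr : Module.finrank ℝ W = n := rfl
  let bas := hT.eigenvectorBasis hfr
  have heig : ∀ i, T (bas i) = hT.eigenvalues hfr i • bas i := fun i =>
    hT.apply_eigenvectorBasis hfr i
  have hmem : ∀ i, hT.eigenvalues hfr i ∈ Set.Icc a b := by
    intro i
    have hnorm : ⟪bas i, bas i⟫ = 1 := by
      rw [real_inner_self_eq_norm_sq, bas.orthonormal.1 i]; norm_num
    constructor
    · have := hlow (bas i)
      rw [heig i, real_inner_smul_left, hnorm] at this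
      simpa using this
    · have := hup (bas i)
      rw [heig i, real_inner_smul_left, hnorm] at this
      simpa using this
  have expand : (Polynomial.aeval T q) w
      = ∑ j, (q.eval (hT.eigenvalues hfr j) * bas.repr w j) • bas j := by
    conv_lhs => rw [← bas.sum_repr w]
    rw [map_sum]
    simp only [map_smul, aeval_apply_eigen T _ _ (heig _) q, smul_smul]
    exact Finset.sum_congr rfl fun j _ => by rw [mul_comm]
  have key : ∀ i, bas.repr ((Polynomial.aeval T q) w) i
      = q.eval (hT.eigenvalues hfr i) * bas.repr w i := by
    intro i
    rw [expand, bas.repr_apply_apply, bas.orthonormal.inner_right_fintype]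
  have hnm : ∀ v : W, ‖v‖ = Real.sqrt (∑ i, (bas.repr v i)^2) := by
    intro v
    rw [← bas.repr.norm_map v, EuclideanSpace.norm_eq]
    congr 1
    exact Finset.sum_congr rfl fun i _ => by rw [Real.norm_eq_abs, sq_abs]
  rw [hnm, hnm w, show M = Real.sqrt (M^2) from (Real.sqrt_sq hM0).symm,
    ← Real.sqrt_mul (sq_nonneg M)]
  apply Real.sqrt_le_sqrt
  rw [Finset.mul_sum]
  apply Finset.sum_le_sum
  intro i _
  rw [key i, mul_pow]
  have h1 := hM _ (hmem i)
  have h2 : (q.eval (hT.eigenvalues hfr i))^2 ≤ M^2 := by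
    rw [← sq_abs]
    exact pow_le_pow_left₀ (abs_nonneg _) h1 2
  exact mul_le_mul_of_nonneg_right h2 (sq_nonneg _)

theorem abstract_pcg {W : Type} [NormedAddCommGroup W] [InnerProductSpace ℝ W]
    [FiniteDimensional ℝ W]
    (Top : W →ₗ[ℝ] W) (hTsym : Top.IsSymmetric) (a b : ℝ) (ha : 0 < a)
    (hlow : ∀ w : W, a * ⟪w, w⟫ ≤ ⟪Top w, w⟫) (hup : ∀ w : W, ⟪Top w, w⟫ ≤ b * ⟪w, w⟫)
    (e : ℕ → W)
    (hCG : ∀ (ℓ : ℕ) (q : Polynomial ℝ), q.natDegree ≤ ℓ → q.eval 0 = 1 →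
      ‖e ℓ‖ ≤ ‖(Polynomial.aeval Top q) (e 0)‖) :
    ∀ ℓ : ℕ, ‖e ℓ‖ ≤ 2 * ((Real.sqrt (b/a) - 1)/(Real.sqrt (b/a) + 1))^ℓ * ‖e 0‖ := by
  intro ℓ
  by_cases htriv : e 0 = 0
  · have h := hCG ℓ 1 (by simp) (by simp)
    simp only [map_one, Module.End.one_apply, htriv, norm_zero] at h
    rw [htriv, norm_zero, mul_zero]
    linarith
  · have hab : a ≤ b := by
      have h1 := hlow (e 0); have h2 := hup (e 0)
      have h3 : 0 < ⟪e 0, e 0⟫ := by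
        rcases lt_or_eq_of_le (real_inner_self_nonneg (x := e 0)) with h | h
        · exact h
        · exact absurd (inner_self_eq_zero.1 h.symm) htriv
      nlinarith
    obtain ⟨q, hdeg, h0, hbd⟩ := cheb_poly_exists a b ha hab ℓ
    have hs1 : 1 ≤ Real.sqrt (b/a) := by
      rw [show (1:ℝ) = Real.sqrt 1 from Real.sqrt_one.symm]
      exact Real.sqrt_le_sqrt ((one_le_div ha).2 hab)
    have hρ : 0 ≤ 2 * ((Real.sqrt (b/a) - 1)/(Real.sqrt (b/a) + 1))^ℓ := by
      have hnum : 0 ≤ Real.sqrt (b/a) - 1 := by linarith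
      have hden : 0 < Real.sqrt (b/a) + 1 := by linarith
      have := pow_nonneg (div_nonneg hnum hden.le) ℓ
      linarith
    calc ‖e ℓ‖ ≤ ‖(Polynomial.aeval Top q) (e 0)‖ := hCG ℓ q hdeg h0
      _ ≤ 2 * ((Real.sqrt (b/a) - 1)/(Real.sqrt (b/a) + 1))^ℓ * ‖e 0‖ :=
          spectral_poly_bound Top hTsym a b _ hρ hlow hup q hbd (e 0)

/-- Type synonym carrying the `K`-inner product. -/
def KSpace (V : Type) : Type := V

/-- Full additive Schwarz PCG convergence: given a subspace decomposition with stability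
constants `C₁, C₂`, the additive Schwarz operator `P = Σ P_j`, the exact solution `u` of
`(Ku, v) = (f, v)`, and the preconditioned conjugate gradient iterates (characterized by
`K`-norm optimality of the error over Krylov polynomial spaces), it holds that
`|u - u^(ℓ)|_K ≤ 2 ((√κ - 1)/(√κ + 1))^ℓ |u - u^(0)|_K` with `κ = C₁ C₂`. -/
theorem additive_schwarz_pcg_convergence
    {V : Type} [NormedAddCommGroup V] [InnerProductSpace ℝ V] [FiniteDimensional ℝ V]
    (K : V →ₗ[ℝ] V)
    (hKsym : ∀ u v : V, ⟪K u, v⟫ = ⟪u, K v⟫)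
    (hKpos : ∀ v : V, v ≠ 0 → 0 < ⟪K v, v⟫)
    (m : ℕ) (Vsub : Fin (m + 1) → Submodule ℝ V)
    (P : Fin (m + 1) → V →ₗ[ℝ] V)
    (hPmem : ∀ j v, P j v ∈ Vsub j)
    (hPproj : ∀ j v, ∀ w ∈ Vsub j, ⟪K (P j v), w⟫ = ⟪K v, w⟫)
    (C₁ C₂ : ℝ) (hC₁ : 0 < C₁) (hC₂ : 0 < C₂)
    (hdecomp : ∀ v : V, ∃ vj : Fin (m + 1) → V,
      (∀ j, vj j ∈ Vsub j) ∧ v = ∑ j, vj j ∧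
      (∑ j, ⟪K (vj j), vj j⟫) ≤ C₁ * ⟪K v, v⟫)
    (hstable : ∀ (v : V) (vj : Fin (m + 1) → V),
      (∀ j, vj j ∈ Vsub j) → v = ∑ j, vj j →
      ⟪K v, v⟫ ≤ C₂ * ∑ j, ⟪K (vj j), vj j⟫)
    (f u : V)
    (hu : ∀ v : V, ⟪K u, v⟫ = ⟪f, v⟫)
    (useq : ℕ → V)
    (hCG : ∀ (ℓ : ℕ) (q : Polynomial ℝ), q.natDegree ≤ ℓ → q.eval 0 = 1 →
      Real.sqrt ⟪K (u - useq ℓ), u - useq ℓ⟫ ≤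
        Real.sqrt ⟪K ((Polynomial.aeval (∑ j, P j : Module.End ℝ V) q) (u - useq 0)),
          (Polynomial.aeval (∑ j, P j : Module.End ℝ V) q) (u - useq 0)⟫) :
    ∀ ℓ : ℕ,
      Real.sqrt ⟪K (u - useq ℓ), u - useq ℓ⟫ ≤
        2 * ((Real.sqrt (C₁ * C₂) - 1) / (Real.sqrt (C₁ * C₂) + 1)) ^ ℓ *
          Real.sqrt ⟪K (u - useq 0), u - useq 0⟫ := by
  -- basic symmetry of the K-bilinear form
  have hBsym : ∀ x y : V, ⟪K x, y⟫ = ⟪K y, x⟫ := fun x y => by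
    rw [hKsym]; exact real_inner_comm _ _
  -- set up the K-inner-product space structure on the synonym
  letI iAG : AddCommGroup (KSpace V) := inferInstanceAs (AddCommGroup V)
  letI iM : Module ℝ (KSpace V) := inferInstanceAs (Module ℝ V)
  let core : InnerProductSpace.Core ℝ (KSpace V) :=
    { inner := fun x y => ⟪K x, y⟫
      conj_inner_symm := fun x y => by
        simp only [starRingEnd_apply, star_trivial]
        exact hBsym y x
      re_inner_nonneg := fun x => by
        simp only [RCLike.re_to_real]
        by_cases hx : (x : V) = 0
        · rw [hx]; exact (by simp : (0:ℝ) = ⟪K (0:V), (0:V)⟫).le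
        · exact (hKpos x hx).le
      definite := fun x hx => by
        by_contra hne
        exact absurd hx (ne_of_gt (hKpos x hne))
      add_left := fun x y z => by
        exact (congrArg (fun v : V => ⟪v, (z : V)⟫) (map_add K (x : V) (y : V))).trans
          (inner_add_left _ _ _)
      smul_left := fun x y r => by
        exact (congrArg (fun v : V => ⟪v, (y : V)⟫) (map_smul K r (x : V))).trans
          (real_inner_smul_left _ _ _) }
  letI iN : NormedAddCommGroup (KSpace V) := core.toNormedAddCommGroup
  letI iIP : InnerProductSpace ℝ (KSpace V) := InnerProductSpace.ofCore core.toCore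
  letI iFD : FiniteDimensional ℝ (KSpace V) := inferInstanceAs (FiniteDimensional ℝ V)
  have hinner : ∀ x y : KSpace V, (inner ℝ x y : ℝ) = ⟪K (x : V), (y : V)⟫ := fun x y => rfl
  have hnorm : ∀ x : KSpace V, ‖x‖ = Real.sqrt ⟪K (x : V), (x : V)⟫ := fun x => by
    rw [norm_eq_sqrt_real_inner, hinner]
  -- the additive Schwarz operator on the synonym
  let ι : V → KSpace V := fun v => v
  let Pop : V →ₗ[ℝ] V := ∑ j, P j
  let Top : KSpace V →ₗ[ℝ] KSpace V := Pop
  -- per-projection symmetry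
  have hPj : ∀ j (x y : V), ⟪K (P j x), y⟫ = ⟪K x, P j y⟫ := by
    intro j x y
    calc ⟪K (P j x), y⟫ = ⟪K y, P j x⟫ := hBsym _ _
      _ = ⟪K (P j y), P j x⟫ := (hPproj j y (P j x) (hPmem j x)).symm
      _ = ⟪K (P j x), P j y⟫ := hBsym _ _
      _ = ⟪K x, P j y⟫ := hPproj j x (P j y) (hPmem j y)
  have hTsym : Top.IsSymmetric := by
    intro x y
    rw [hinner, hinner]
    show ⟪K (Pop x), y⟫ = ⟪K (x : V), Pop y⟫
    have key : ∀ x y : V, ⟪K (Pop x), y⟫ = ⟪K x, Pop y⟫ := fun x y => by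
      simp only [Pop, LinearMap.sum_apply, map_sum, sum_inner, inner_sum]
      exact Finset.sum_congr rfl fun j _ => hPj j x y
    exact key x y
  have hPjj : ∀ j (v : V), ⟪K (P j v), v⟫ = ⟪K (P j v), P j v⟫ := by
    intro j v
    rw [hPproj j v (P j v) (hPmem j v)]
    exact hBsym _ _
  have hTdiag : ∀ w : KSpace V,
      (inner ℝ (Top w) w : ℝ) = ∑ j, ⟪K (P j (w : V)), P j (w : V)⟫ := by
    intro w
    rw [hinner]
    show ⟪K (Pop (w : V)), (w : V)⟫ = _
    have key : ∀ w : V, ⟪K (Pop w), w⟫ = ∑ j, ⟪K (P j w), P j w⟫ := fun w => by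
      simp only [Pop, LinearMap.sum_apply, map_sum, sum_inner]
      exact Finset.sum_congr rfl fun j _ => hPjj j w
    exact key w
  have hq : ∀ x : KSpace V, ‖x‖^2 = ⟪K (x : V), (x : V)⟫ := fun x => by
    rw [← real_inner_self_eq_norm_sq]
    exact hinner x x
  have hinnn : ∀ x : KSpace V, (0:ℝ) ≤ ⟪K (x : V), (x : V)⟫ := fun x => by
    rw [← hq]; positivity
  -- lower spectral bound
  have hlow : ∀ w : KSpace V, C₁⁻¹ * (inner ℝ w w : ℝ) ≤ inner ℝ (Top w) w := by
    intro w
    obtain ⟨vj, hmemj, hdec, hstab⟩ := hdecomp (w : V)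
    have hsplit : ⟪K (w : V), (w : V)⟫ = ∑ j, ⟪K (P j (w : V)), vj j⟫ := by
      calc ⟪K (w : V), (w : V)⟫ = ⟪K (w : V), ∑ j, vj j⟫ := by rw [← hdec]
        _ = ∑ j, ⟪K (w : V), vj j⟫ := inner_sum _ _ _
        _ = ∑ j, ⟪K (P j (w : V)), vj j⟫ :=
            Finset.sum_congr rfl fun j _ => (hPproj j (w : V) (vj j) (hmemj j)).symm
    have hcsK : ∀ x y : V, ⟪K x, y⟫ ≤ ‖ι x‖ * ‖ι y‖ := fun x y => by
      rw [show ⟪K x, y⟫ = (inner ℝ (ι x) (ι y) : ℝ) from rfl]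
      exact real_inner_le_norm _ _
    have hcs1 : ⟪K (w : V), (w : V)⟫
        ≤ ∑ j, ‖ι (P j (w : V))‖ * ‖ι (vj j)‖ := by
      rw [hsplit]
      refine Finset.sum_le_sum fun j _ => ?_
      exact hcsK (P j (w : V)) (vj j)
    have hcs2 := Finset.sum_mul_sq_le_sq_mul_sq Finset.univ
      (fun j => ‖ι (P j (w : V))‖) (fun j => ‖ι (vj j)‖)
    have hS2 : ∑ j, ‖ι (P j (w : V))‖^2 = (inner ℝ (Top w) w : ℝ) := by
      rw [hTdiag]
      exact Finset.sum_congr rfl fun j _ => hq _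
    have hS1 : ∑ j, ‖ι (vj j)‖^2 = ∑ j, ⟪K (vj j), vj j⟫ :=
      Finset.sum_congr rfl fun j _ => hq _
    rw [hinner w w, inv_mul_le_iff₀ hC₁]
    set X := ⟪K (w : V), (w : V)⟫ with hXd
    set A := (inner ℝ (Top w) w : ℝ) with hAd
    set B := ∑ j, ‖ι (P j (w : V))‖ * ‖ι (vj j)‖ with hBd
    have hXnn : 0 ≤ X := hinnn w
    have hAnn : 0 ≤ A := by
      rw [hAd, hTdiag]
      exact Finset.sum_nonneg fun j _ => hinnn (ι (P j (w : V)))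
    have hBnn : 0 ≤ B := le_trans hXnn hcs1
    have hB2 : B^2 ≤ A * ∑ j, ⟪K (vj j), vj j⟫ := by
      rw [← hS2, ← hS1]; exact hcs2
    have h3 : A * (∑ j, ⟪K (vj j), vj j⟫) ≤ A * (C₁ * X) :=
      mul_le_mul_of_nonneg_left hstab hAnn
    rcases eq_or_lt_of_le hXnn with hX0 | hXpos
    · rw [← hX0]
      positivity
    · nlinarith [hcs1, hB2, h3]
  -- upper spectral bound
  have hup : ∀ w : KSpace V, (inner ℝ (Top w) w : ℝ) ≤ C₂ * inner ℝ w w := by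
    intro w
    have hst := hstable (Pop (w : V)) (fun j => P j (w : V)) (fun j => hPmem j _)
      (LinearMap.sum_apply _ _ _)
    have hN2 : ‖Top w‖^2 ≤ C₂ * (inner ℝ (Top w) w : ℝ) := by
      rw [hq (Top w), hTdiag]
      exact hst
    have hcs : (inner ℝ (Top w) w : ℝ) ≤ ‖Top w‖ * ‖w‖ := real_inner_le_norm _ _
    rw [real_inner_self_eq_norm_sq]
    set A := (inner ℝ (Top w) w : ℝ) with hAd
    set N := ‖Top w‖ with hNd
    set M := ‖w‖ with hMd
    have hNnn : 0 ≤ N := norm_nonneg _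
    have hMnn : 0 ≤ M := norm_nonneg _
    rcases eq_or_lt_of_le hNnn with hN0 | hNpos
    · have : A ≤ 0 := by rw [← hN0] at hcs; simpa using hcs
      nlinarith
    · have hNC : N ≤ C₂ * M := by nlinarith [hN2, hcs]
      nlinarith [hcs, mul_le_mul_of_nonneg_right hNC hMnn]
  -- assemble
  let e : ℕ → KSpace V := fun ℓ => ι (u - useq ℓ)
  have hCG' : ∀ (ℓ : ℕ) (q : Polynomial ℝ), q.natDegree ≤ ℓ → q.eval 0 = 1 →
      ‖e ℓ‖ ≤ ‖(Polynomial.aeval Top q) (e 0)‖ := by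
    intro ℓ q h1 h2
    rw [hnorm, hnorm]
    exact hCG ℓ q h1 h2
  have hmain := abstract_pcg Top hTsym C₁⁻¹ C₂ (inv_pos.2 hC₁) hlow hup e hCG'
  intro ℓ
  have h := hmain ℓ
  rw [hnorm, hnorm, show C₂ / C₁⁻¹ = C₁ * C₂ by field_simp] at h
  exact h
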